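/- If G is a graph with treewidth at least 3 and v is a vertex of degree 2 in G, then suppressing v (deleting v and adding an edge between its two neighbors if not already present) does not change the treewidth of G. -/

import Mathlib

open SimpleGraph

/-- The ladder of length `k`: the `2 × (k+1)` grid graph. -/
def ladder (k : ℕ) : SimpleGraph (Fin 2 × Fin (k + 1)) :=
  SimpleGraph.fromRel fun p q =>
    (p.1 = q.1 ∧ p.2.val + 1 = q.2.val) ∨ (p.2 = q.2 ∧ p.1 ≠ q.1)

/-- `G` contains a ladder of length `k`: an induced copy of the `2 × (k+1)` grid,
attached to the rest of `G` only via its four cornerpoints (the vertices in columns `0` and `k`). -/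
structure ContainsLadder {V : Type} (G : SimpleGraph V) (k : ℕ) where
  f : Fin 2 × Fin (k + 1) → V
  inj : Function.Injective f
  induced : ∀ p q, G.Adj (f p) (f q) ↔ (ladder k).Adj p q
  attach : ∀ p : Fin 2 × Fin (k + 1), p.2.val ≠ 0 → p.2.val ≠ k →
    ∀ v : V, G.Adj (f p) v → v ∈ Set.range f

/-- The two horizontal edges of square `i` of the ladder form an edge cut of `G`. -/
def ContainsLadder.SquareCut {V : Type} {G : SimpleGraph V} {k : ℕ}
    (L : ContainsLadder G k) (i : Fin k) : Prop :=
  ¬ (G.deleteEdges {s(L.f (0, i.castSucc), L.f (0, i.succ)),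
      s(L.f (1, i.castSucc), L.f (1, i.succ))}).Connected

/-- The ladder is disconnecting: the horizontal edges of some square form an edge cut. -/
def ContainsLadder.Disconnects {V : Type} {G : SimpleGraph V} {k : ℕ}
    (L : ContainsLadder G k) : Prop :=
  ∃ i : Fin k, L.SquareCut i

/-- A tree decomposition of a graph. -/
structure TreeDecomp {V : Type} (G : SimpleGraph V) where
  ι : Type
  [fin : Fintype ι]
  tree : SimpleGraph ι
  isTree : tree.IsTree
  bag : ι → Finset V
  cover_vertex : ∀ v : V, ∃ i, v ∈ bag i
  cover_edge : ∀ ⦃u v : V⦄, G.Adj u v → ∃ i, u ∈ bag i ∧ v ∈ bag i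
  bag_connected : ∀ v : V, (tree.induce {i | v ∈ bag i}).Connected

/-- The width of a tree decomposition: maximum bag size minus one. -/
def TreeDecomp.width {V : Type} {G : SimpleGraph V} (td : TreeDecomp G) : ℕ :=
  letI := td.fin
  (Finset.univ.sup fun i => (td.bag i).card) - 1

/-- The treewidth of a graph: minimum width over all tree decompositions. -/
noncomputable def treewidth {V : Type} (G : SimpleGraph V) : ℕ :=
  sInf (Set.range fun td : TreeDecomp G => td.width)

/-- `H` is a minor of `G`: witnessed by pairwise disjoint nonempty connected branch sets. -/
def IsMinor {W V : Type} (H : SimpleGraph W) (G : SimpleGraph V) : Prop :=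
  ∃ φ : W → Set V, (∀ w, (φ w).Nonempty) ∧ (∀ w, (G.induce (φ w)).Connected) ∧
    (∀ w w', w ≠ w' → Disjoint (φ w) (φ w')) ∧
    (∀ w w', H.Adj w w' → ∃ u ∈ φ w, ∃ v ∈ φ w', G.Adj u v)

/-- Lengthen the ladder `L` by `m` squares, by inserting `m` new rungs between
columns `0` and `1` (subdividing the two horizontal edges and adding rungs). -/
def extendLadder {V : Type} (G : SimpleGraph V) {k : ℕ} (L : ContainsLadder G k) (m : ℕ) :
    SimpleGraph (V ⊕ (Fin 2 × Fin m)) :=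
  SimpleGraph.fromRel fun p q =>
    (∃ u v : V, p = Sum.inl u ∧ q = Sum.inl v ∧ G.Adj u v ∧
      (m ≠ 0 → ∀ a : Fin 2, s(u, v) ≠ s(L.f (a, 0), L.f (a, 1)))) ∨
    (∃ (a : Fin 2) (j : Fin m), j.val = 0 ∧ p = Sum.inl (L.f (a, 0)) ∧ q = Sum.inr (a, j)) ∨
    (∃ (a : Fin 2) (j : Fin m), j.val = m - 1 ∧ p = Sum.inr (a, j) ∧ q = Sum.inl (L.f (a, 1))) ∨
    (∃ (a : Fin 2) (j j' : Fin m), j.val + 1 = j'.val ∧ p = Sum.inr (a, j) ∧ q = Sum.inr (a, j')) ∨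
    (∃ (a b : Fin 2) (j : Fin m), a ≠ b ∧ p = Sum.inr (a, j) ∧ q = Sum.inr (b, j))

/-- Insert one new rung into square `i` of the ladder `L`: two new vertices `inr 0, inr 1`
subdividing the horizontal edges of square `i`, joined by an edge. -/
def insertRung {V : Type} (G : SimpleGraph V) {k : ℕ} (L : ContainsLadder G k) (i : Fin k) :
    SimpleGraph (V ⊕ Fin 2) :=
  SimpleGraph.fromRel fun p q =>
    (∃ u v : V, p = Sum.inl u ∧ q = Sum.inl v ∧ G.Adj u v ∧
      ∀ a : Fin 2, s(u, v) ≠ s(L.f (a, i.castSucc), L.f (a, i.succ))) ∨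
    (∃ a : Fin 2, p = Sum.inl (L.f (a, i.castSucc)) ∧ q = Sum.inr a) ∨
    (∃ a : Fin 2, p = Sum.inr a ∧ q = Sum.inl (L.f (a, i.succ))) ∨
    (p = Sum.inr (0 : Fin 2) ∧ q = Sum.inr (1 : Fin 2))

/-- Contract the edge `{u, v}` of `G`: merge `v` into `u`. -/
def contractEdge {V : Type} (G : SimpleGraph V) (u v : V) : SimpleGraph {x : V // x ≠ v} :=
  SimpleGraph.fromRel fun x y =>
    G.Adj x.val y.val ∨ (x.val = u ∧ G.Adj v y.val) ∨ (y.val = u ∧ G.Adj x.val v)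

/-- Subdivide the edge `{u, v}` of `G` with a new vertex. -/
def subdivide {V : Type} (G : SimpleGraph V) (u v : V) : SimpleGraph (V ⊕ Unit) :=
  SimpleGraph.fromRel fun p q =>
    (∃ x y : V, p = Sum.inl x ∧ q = Sum.inl y ∧ G.Adj x y ∧ s(x, y) ≠ s(u, v)) ∨
    (p = Sum.inl u ∧ q = Sum.inr ()) ∨ (p = Sum.inl v ∧ q = Sum.inr ())

/-- Suppress the degree-2 vertex `v` with neighbours `a` and `b`:
delete `v` and add the edge `{a, b}` (if not already present). -/
def suppress {V : Type} (G : SimpleGraph V) (v a b : V) : SimpleGraph {x : V // x ≠ v} :=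
  SimpleGraph.fromRel fun x y =>
    G.Adj x.val y.val ∨ (x.val = a ∧ y.val = b)

/-- A graph is chordal if every cycle on at least 4 vertices has a chord. -/
def IsChordal {V : Type} (G : SimpleGraph V) : Prop :=
  ∀ n : ℕ, ∀ f : Fin (n + 4) → V, Function.Injective f →
    (∀ i : Fin (n + 4), G.Adj (f i) (f (i + 1))) →
    ∃ i j : Fin (n + 4), i ≠ j ∧ j ≠ i + 1 ∧ i ≠ j + 1 ∧ G.Adj (f i) (f j)

/-- The induced subgraph on `S` has no cutvertex. -/
def NoCutvertex {V : Type} (G : SimpleGraph V) (S : Set V) : Prop :=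
  ∀ v ∈ S, ∀ x y : ↥(S \ {v}), (G.induce (S \ {v})).Reachable x y

/-- `S` is a block (biconnected component) of `G`: a maximal connected
vertex set without a cutvertex. -/
def IsBlock {V : Type} (G : SimpleGraph V) (S : Set V) : Prop :=
  S.Nonempty ∧ (G.induce S).Connected ∧ NoCutvertex G S ∧
  ∀ T : Set V, S ⊆ T → (G.induce T).Connected → NoCutvertex G T → T = S


section SuppressHelpers

lemma induce_mono_reach {V : Type} {G : SimpleGraph V} {A B : Set V} (h : A ⊆ B) {x y : ↥A}
    (hr : (G.induce A).Reachable x y) :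
    (G.induce B).Reachable ⟨x.1, h x.2⟩ ⟨y.1, h y.2⟩ := by
  exact hr.map ({ toFun := fun z => ⟨z.1, h z.2⟩, map_rel' := fun hadj => hadj } :
    G.induce A →g G.induce B)

lemma induce_singleton_connected {V : Type} (G : SimpleGraph V) (z : V) :
    (G.induce {z}).Connected := by
  rw [SimpleGraph.connected_iff]
  refine ⟨fun x y => ?_, ⟨⟨z, rfl⟩⟩⟩
  have : x = y := by
    ext
    rw [x.2, y.2]
  rw [this]

lemma aux_induce_union_connected {V : Type} {G : SimpleGraph V} {A B : Set V}
    (hA : (G.induce A).Connected) (hB : (G.induce B).Connected)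
    (h : ∃ x ∈ A, ∃ y ∈ B, x = y ∨ G.Adj x y) :
    (G.induce (A ∪ B)).Connected := by
  obtain ⟨x, hx, y, hy, hxy⟩ := h
  rw [SimpleGraph.connected_iff]
  refine ⟨fun p q => ?_, ⟨⟨x, Or.inl hx⟩⟩⟩
  have key : ∀ p : ↥(A ∪ B), (G.induce (A ∪ B)).Reachable p ⟨x, Or.inl hx⟩ := by
    rintro ⟨p, hp | hp⟩
    · exact induce_mono_reach Set.subset_union_left (hA.preconnected ⟨p, hp⟩ ⟨x, hx⟩)
    · refine Reachable.trans
        (induce_mono_reach Set.subset_union_right (hB.preconnected ⟨p, hp⟩ ⟨y, hy⟩)) ?_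
      rcases hxy with rfl | hadj
      · rfl
      · exact Adj.reachable
          (by exact hadj.symm : (G.induce (A ∪ B)).Adj ⟨y, Or.inr hy⟩ ⟨x, Or.inl hx⟩)
  exact (key p).trans (key q).symm

/-- Attach a pendant vertex `none` to the vertex `i0` of `T`. -/
def pendant {ι : Type} (T : SimpleGraph ι) (i0 : ι) : SimpleGraph (Option ι) :=
  SimpleGraph.fromRel fun p q =>
    (∃ i j : ι, p = some i ∧ q = some j ∧ T.Adj i j) ∨ (p = none ∧ q = some i0)

lemma pendant_adj_ss {ι : Type} (T : SimpleGraph ι) (i0 : ι) (i j : ι) :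
    (pendant T i0).Adj (some i) (some j) ↔ T.Adj i j := by
  rw [pendant, fromRel_adj]
  constructor
  · rintro ⟨hne, (⟨i', j', hi, hj, hadj⟩ | ⟨h1, _⟩) | (⟨i', j', hi, hj, hadj⟩ | ⟨h1, _⟩)⟩
    · cases hi; cases hj; exact hadj
    · exact absurd h1 (by simp)
    · cases hi; cases hj; exact hadj.symm
    · exact absurd h1 (by simp)
  · intro h
    exact ⟨by simpa using h.ne, Or.inl (Or.inl ⟨i, j, rfl, rfl, h⟩)⟩

lemma pendant_adj_none {ι : Type} (T : SimpleGraph ι) (i0 : ι) (q : Option ι) :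
    (pendant T i0).Adj none q ↔ q = some i0 := by
  rw [pendant, fromRel_adj]
  constructor
  · rintro ⟨hne, (⟨i', j', hi, hj, hadj⟩ | ⟨h1, h2⟩) | (⟨i', j', hi, hj, hadj⟩ | ⟨h1, h2⟩)⟩
    · exact absurd hi (by simp)
    · exact h2
    · exact absurd hj (by simp)
    · exact absurd h2 (by simp)
  · rintro rfl
    exact ⟨by simp, Or.inl (Or.inr ⟨rfl, rfl⟩)⟩

lemma downWalk {ι : Type} {T : SimpleGraph ι} {T' : SimpleGraph (Option ι)}
    (hadj : ∀ i j : ι, T'.Adj (some i) (some j) → T.Adj i j) :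
    ∀ {x y : Option ι} (p : T'.Walk x y), (none ∉ p.support) →
    ∀ i j : ι, x = some i → y = some j →
    ∃ q : T.Walk i j, p.edges = q.edges.map (Sym2.map some) ∧
      p.support = q.support.map some := by
  intro x y p
  induction p with
  | nil =>
    rintro _ i j rfl hj
    obtain rfl : i = j := Option.some.inj hj
    exact ⟨.nil, by simp, by simp⟩
  | @cons u z y h p ih =>
    rintro hns i j rfl rfl
    have hzn : z ≠ none := by
      rintro rfl
      exact hns (by simp [Walk.support_cons])
    obtain ⟨k, rfl⟩ := Option.ne_none_iff_exists'.mp hzn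
    have hns' : none ∉ p.support := fun hmem => hns (by simp [Walk.support_cons, hmem])
    obtain ⟨q, hq1, hq2⟩ := ih hns' k j rfl rfl
    refine ⟨.cons (hadj i k h) q, ?_, ?_⟩
    · simp [Walk.edges_cons, hq1]
    · simp [Walk.support_cons, hq2]

lemma pendant_isTree {ι : Type} (T : SimpleGraph ι) (hT : T.IsTree) (i0 : ι) :
    (pendant T i0).IsTree := by
  have adj_ss := pendant_adj_ss T i0
  have adj_none := pendant_adj_none T i0
  have hadj' : ∀ i j : ι, (pendant T i0).Adj (some i) (some j) → T.Adj i j :=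
    fun i j h => (adj_ss i j).1 h
  constructor
  · rw [SimpleGraph.connected_iff]
    refine ⟨fun p q => ?_, ⟨none⟩⟩
    have key : ∀ p : Option ι, (pendant T i0).Reachable p (some i0) := by
      rintro (_ | i)
      · exact Adj.reachable ((adj_none _).2 rfl)
      · have : T.Reachable i i0 := hT.isConnected.preconnected i i0
        exact this.map ({ toFun := some, map_rel' := fun h => (adj_ss _ _).2 h } :
          T →g pendant T i0)
    exact (key p).trans (key q).symm
  · intro u c hc
    classical
    by_cases hmem : none ∈ c.support
    · have hc' := hc.rotate hmem
      rcases hcc : c.rotate none hmem with _ | ⟨h, p⟩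
      · exact hc'.ne_nil hcc
      · rw [hcc] at hc'
        rename_i z
        have hz : z = some i0 := (adj_none z).1 h
        subst hz
        obtain ⟨z2, h2, q2, hq2⟩ :=
          Walk.exists_eq_cons_of_ne (by simp : (none : Option ι) ≠ some i0) p.reverse
        have hz2 : z2 = some i0 := (adj_none z2).1 h2
        subst hz2
        have hedge : s(none, some i0) ∈ p.edges := by
          have : s(none, some i0) ∈ p.reverse.edges := by
            rw [hq2]; simp [Walk.edges_cons]
          simpa [Walk.edges_reverse] using this
        have htrail := hc'.isTrail.edges_nodup
        simp [Walk.edges_cons] at htrail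
        exact htrail.1 (by simpa [Sym2.eq_swap] using hedge)
    · have hu : u ≠ none := fun h => hmem (h ▸ c.start_mem_support)
      obtain ⟨i, rfl⟩ := Option.ne_none_iff_exists'.mp hu
      obtain ⟨q, hq1, hq2⟩ := downWalk hadj' c hmem i i rfl rfl
      refine hT.IsAcyclic q ?_
      refine ⟨⟨⟨?_⟩, ?_⟩, ?_⟩
      · have := hc.isTrail.edges_nodup
        rw [hq1] at this
        exact this.of_map _
      · intro hnil
        apply hc.ne_nil
        have : c.edges = [] := by rw [hq1, hnil]; simp
        cases c with
        | nil => rfl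
        | cons h p => simp [Walk.edges_cons] at this
      · have h5 := hc.support_nodup
        rw [hq2, ← List.map_tail] at h5
        exact h5.of_map _

/-- The trivial tree decomposition: a single bag containing everything. -/
noncomputable def trivialTD {V : Type} [Fintype V] (G : SimpleGraph V) : TreeDecomp G where
  ι := Unit
  tree := ⊥
  isTree := by
    constructor
    · rw [SimpleGraph.connected_iff]
      exact ⟨fun x y => by cases x; cases y; exact Reachable.refl _, ⟨()⟩⟩
    · intro u c hc
      cases c with
      | nil => exact hc.ne_nil rfl
      | cons h p => exact h.elim
  bag := fun _ => Finset.univ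
  cover_vertex := fun w => ⟨(), Finset.mem_univ w⟩
  cover_edge := fun u w _ => ⟨(), Finset.mem_univ u, Finset.mem_univ w⟩
  bag_connected := fun w => by
    rw [SimpleGraph.connected_iff]
    refine ⟨fun x y => ?_, ⟨⟨(), Finset.mem_univ w⟩⟩⟩
    have : x = y := Subtype.ext (Subsingleton.elim _ _)
    rw [this]

lemma suppress_adj' {V : Type} (G : SimpleGraph V) (v a b : V) (x y : {x : V // x ≠ v}) :
    (suppress G v a b).Adj x y ↔ x ≠ y ∧
      (G.Adj x.val y.val ∨ (x.val = a ∧ y.val = b) ∨ (y.val = a ∧ x.val = b)) := by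
  rw [suppress, fromRel_adj]
  constructor
  · rintro ⟨hne, (h | h) | (h | h)⟩
    · exact ⟨hne, Or.inl h⟩
    · exact ⟨hne, Or.inr (Or.inl h)⟩
    · exact ⟨hne, Or.inl h.symm⟩
    · exact ⟨hne, Or.inr (Or.inr h)⟩
  · rintro ⟨hne, h | h | h⟩
    · exact ⟨hne, Or.inl (Or.inl h)⟩
    · exact ⟨hne, Or.inl (Or.inr h)⟩
    · exact ⟨hne, Or.inr (Or.inr h)⟩

end SuppressHelpers

theorem stmt19 {V : Type} [Fintype V] (G : SimpleGraph V) (v a b : V)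
    (hab : a ≠ b) (hdeg : G.neighborSet v = {a, b}) (htw : 3 ≤ treewidth G) :
    treewidth (suppress G v a b) = treewidth G := by
  classical
  have hva : G.Adj v a := by
    rw [← SimpleGraph.mem_neighborSet, hdeg]; exact Set.mem_insert _ _
  have hvb : G.Adj v b := by
    rw [← SimpleGraph.mem_neighborSet, hdeg]; exact Set.mem_insert_of_mem _ rfl
  have hav : a ≠ v := hva.ne'
  have hbv : b ≠ v := hvb.ne'
  -- Direction 1 : treewidth (suppress G v a b) ≤ treewidth G
  have dir1 : treewidth (suppress G v a b) ≤ treewidth G := by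
    refine le_csInf ⟨(trivialTD G).width, ⟨trivialTD G, rfl⟩⟩ ?_
    rintro w ⟨td, rfl⟩
    letI := td.fin
    set nb : td.ι → Finset {x : V // x ≠ v} :=
      fun i => Finset.subtype (· ≠ v)
        (if v ∈ td.bag i then insert a (td.bag i) else td.bag i) with hnb
    have hmem : ∀ (i : td.ι) (x : {x : V // x ≠ v}), x ∈ nb i ↔
        (x.val ∈ td.bag i ∨ (x.val = a ∧ v ∈ td.bag i)) := by
      intro i x
      rw [hnb]
      simp only [Finset.mem_subtype]
      split_ifs with h
      · simp only [Finset.mem_insert]; tauto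
      · tauto
    have hcard : ∀ i : td.ι, (nb i).card ≤ (td.bag i).card := by
      intro i
      rw [hnb]
      simp only []
      rw [Finset.card_subtype]
      split_ifs with h
      · have hsub : (insert a (td.bag i)).filter (· ≠ v) ⊆ insert a ((td.bag i).erase v) := by
          intro x hx
          simp only [Finset.mem_filter, Finset.mem_insert, Finset.mem_erase] at hx ⊢
          tauto
        calc ((insert a (td.bag i)).filter (· ≠ v)).card
            ≤ (insert a ((td.bag i).erase v)).card := Finset.card_le_card hsub
          _ ≤ ((td.bag i).erase v).card + 1 := Finset.card_insert_le _ _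
          _ = ((td.bag i).card - 1) + 1 := by rw [Finset.card_erase_of_mem h]
          _ = (td.bag i).card := Nat.succ_pred_eq_of_pos (Finset.card_pos.2 ⟨v, h⟩)
      · exact Finset.card_le_card (Finset.filter_subset _ _)
    let td' : TreeDecomp (suppress G v a b) :=
      { ι := td.ι
        fin := td.fin
        tree := td.tree
        isTree := td.isTree
        bag := nb
        cover_vertex := by
          intro x
          obtain ⟨i, hi⟩ := td.cover_vertex x.val
          exact ⟨i, (hmem i x).2 (Or.inl hi)⟩
        cover_edge := by
          intro x y h
          rw [suppress_adj'] at h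
          obtain ⟨hne, hG | ⟨hx, hy⟩ | ⟨hy, hx⟩⟩ := h
          · obtain ⟨i, hi1, hi2⟩ := td.cover_edge hG
            exact ⟨i, (hmem i x).2 (Or.inl hi1), (hmem i y).2 (Or.inl hi2)⟩
          · obtain ⟨i, hi1, hi2⟩ := td.cover_edge hvb
            exact ⟨i, (hmem i x).2 (Or.inr ⟨hx, hi1⟩),
              (hmem i y).2 (Or.inl (by rw [hy]; exact hi2))⟩
          · obtain ⟨i, hi1, hi2⟩ := td.cover_edge hvb
            exact ⟨i, (hmem i x).2 (Or.inl (by rw [hx]; exact hi2)),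
              (hmem i y).2 (Or.inr ⟨hy, hi1⟩)⟩
        bag_connected := by
          intro x
          by_cases hxa : x.val = a
          · have hset : {i | x ∈ nb i} = {i | a ∈ td.bag i} ∪ {i | v ∈ td.bag i} := by
              ext i
              simp only [Set.mem_setOf_eq, Set.mem_union, hmem, hxa]
              tauto
            rw [hset]
            obtain ⟨i1, hi1v, hi1a⟩ := td.cover_edge hva
            exact aux_induce_union_connected (td.bag_connected a) (td.bag_connected v)
              ⟨i1, hi1a, i1, hi1v, Or.inl rfl⟩
          · have hset : {i | x ∈ nb i} = {i | x.val ∈ td.bag i} := by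
              ext i
              simp only [Set.mem_setOf_eq, hmem]
              tauto
            rw [hset]
            exact td.bag_connected x.val }
    refine le_trans (Nat.sInf_le ⟨td', rfl⟩) ?_
    show (Finset.univ.sup fun i => (nb i).card) - 1 ≤ td.width
    refine Nat.sub_le_sub_right ?_ 1
    exact Finset.sup_mono_fun fun i _ => hcard i
  -- Direction 2
  have hne2 : (Set.range fun td : TreeDecomp (suppress G v a b) => td.width).Nonempty :=
    ⟨(trivialTD (suppress G v a b)).width, ⟨trivialTD (suppress G v a b), rfl⟩⟩
  obtain ⟨td, htd⟩ := Nat.sInf_mem hne2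
  letI := td.fin
  have hab' : (suppress G v a b).Adj ⟨a, hav⟩ ⟨b, hbv⟩ := by
    rw [suppress_adj']
    exact ⟨fun h => hab (congrArg Subtype.val h), Or.inr (Or.inl ⟨rfl, rfl⟩)⟩
  obtain ⟨i0, hi0a, hi0b⟩ := td.cover_edge hab'
  set nb2 : Option td.ι → Finset V := fun i' =>
    match i' with
    | none => {v, a, b}
    | some i => (td.bag i).image Subtype.val with hnb2
  have hm_none : ∀ w : V, w ∈ nb2 none ↔ (w = v ∨ w = a ∨ w = b) := by
    intro w; rw [hnb2]; simp
  have hm_some : ∀ (i : td.ι) (w : V) (hw : w ≠ v),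
      (w ∈ nb2 (some i) ↔ (⟨w, hw⟩ : {x : V // x ≠ v}) ∈ td.bag i) := by
    intro i w hw
    rw [hnb2]
    simp only [Finset.mem_image]
    constructor
    · rintro ⟨u, hu, rfl⟩
      convert hu
    · intro h
      exact ⟨⟨w, hw⟩, h, rfl⟩
  have hm_some_v : ∀ i : td.ι, v ∉ nb2 (some i) := by
    intro i h
    rw [hnb2] at h
    simp only [Finset.mem_image] at h
    obtain ⟨u, _, hu⟩ := h
    exact u.2 hu
  have himg : ∀ (x : {x : V // x ≠ v}),
      ((pendant td.tree i0).induce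
        ((some : td.ι → Option td.ι) '' {i | x ∈ td.bag i})).Connected := by
    intro x
    refine Connected.map
      ({ toFun := fun p => ⟨some p.1, ⟨p.1, p.2, rfl⟩⟩,
         map_rel' := fun h => (pendant_adj_ss td.tree i0 _ _).2 h } :
        td.tree.induce {i | x ∈ td.bag i} →g
        (pendant td.tree i0).induce ((some : td.ι → Option td.ι) '' {i | x ∈ td.bag i}))
      ?_ (td.bag_connected x)
    rintro ⟨p, i, hi, rfl⟩
    exact ⟨⟨i, hi⟩, rfl⟩
  have hconn : ∀ w : V,
      ((pendant td.tree i0).induce {i' | w ∈ nb2 i'}).Connected := by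
    intro w
    by_cases hwv : w = v
    · subst hwv
      have hset : {i' | w ∈ nb2 i'} = {(none : Option td.ι)} := by
        ext i'
        cases i' with
        | none => simp [hm_none]
        | some i => simp [Set.mem_setOf_eq, hm_some_v i]
      rw [hset]
      exact induce_singleton_connected _ _
    · by_cases hwab : w = a ∨ w = b
      · have hx : ∃ hw : w ≠ v, (⟨w, hw⟩ : {x : V // x ≠ v}) ∈ td.bag i0 := by
          rcases hwab with rfl | rfl
          · exact ⟨hwv, hi0a⟩
          · exact ⟨hwv, hi0b⟩
        obtain ⟨hw, hwbag⟩ := hx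
        have hset : {i' | w ∈ nb2 i'} =
            {(none : Option td.ι)} ∪ (some '' {i | (⟨w, hw⟩ : {x : V // x ≠ v}) ∈ td.bag i}) := by
          ext i'
          cases i' with
          | none =>
            simp only [Set.mem_setOf_eq, hm_none, Set.mem_union, Set.mem_singleton_iff,
              Set.mem_image]
            tauto
          | some i =>
            simp only [Set.mem_setOf_eq, hm_some i w hwv, Set.mem_union,
              Set.mem_singleton_iff, Set.mem_image]
            constructor
            · intro h; exact Or.inr ⟨i, h, rfl⟩
            · rintro (h | ⟨j, hj, hji⟩)
              · exact absurd h (by simp)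
              · cases Option.some.inj hji; exact hj
        rw [hset]
        refine aux_induce_union_connected (induce_singleton_connected _ _) (himg ⟨w, hw⟩) ?_
        exact ⟨none, rfl, some i0, ⟨i0, hwbag, rfl⟩, Or.inr ((pendant_adj_none _ _ _).2 rfl)⟩
      · push_neg at hwab
        have hset : {i' | w ∈ nb2 i'} =
            (some '' {i | (⟨w, hwv⟩ : {x : V // x ≠ v}) ∈ td.bag i}) := by
          ext i'
          cases i' with
          | none =>
            simp only [Set.mem_setOf_eq, hm_none, Set.mem_image]
            constructor
            · rintro (h | h | h)
              · exact absurd h hwv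
              · exact absurd h hwab.1
              · exact absurd h hwab.2
            · rintro ⟨j, _, hji⟩; exact absurd hji (by simp)
          | some i =>
            simp only [Set.mem_setOf_eq, hm_some i w hwv, Set.mem_image]
            constructor
            · intro h; exact ⟨i, h, rfl⟩
            · rintro ⟨j, hj, hji⟩
              cases Option.some.inj hji; exact hj
        rw [hset]
        exact himg ⟨w, hwv⟩
  have hcv : ∀ w : V, ∃ i', w ∈ nb2 i' := by
    intro w
    by_cases hwv : w = v
    · exact ⟨none, (hm_none w).2 (Or.inl hwv)⟩
    · obtain ⟨i, hi⟩ := td.cover_vertex ⟨w, hwv⟩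
      exact ⟨some i, (hm_some i w hwv).2 hi⟩
  have hce : ∀ ⦃x y : V⦄, G.Adj x y → ∃ i', x ∈ nb2 i' ∧ y ∈ nb2 i' := by
    intro x y h
    by_cases hxv : x = v
    · subst hxv
      have hy : y ∈ G.neighborSet x := h
      rw [hdeg] at hy
      refine ⟨none, (hm_none x).2 (Or.inl rfl), (hm_none y).2 ?_⟩
      rcases hy with rfl | rfl
      · exact Or.inr (Or.inl rfl)
      · exact Or.inr (Or.inr rfl)
    · by_cases hyv : y = v
      · subst hyv
        have hx : x ∈ G.neighborSet y := h.symm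
        rw [hdeg] at hx
        refine ⟨none, (hm_none x).2 ?_, (hm_none y).2 (Or.inl rfl)⟩
        rcases hx with rfl | rfl
        · exact Or.inr (Or.inl rfl)
        · exact Or.inr (Or.inr rfl)
      · have hadj : (suppress G v a b).Adj ⟨x, hxv⟩ ⟨y, hyv⟩ := by
          rw [suppress_adj']
          exact ⟨fun he => h.ne (congrArg Subtype.val he), Or.inl h⟩
        obtain ⟨i, hi1, hi2⟩ := td.cover_edge hadj
        exact ⟨some i, (hm_some i x hxv).2 hi1, (hm_some i y hyv).2 hi2⟩
  have hdir2 : treewidth G ≤ max 2 td.width := by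
    have hwid : (@Finset.univ (Option td.ι) _).sup (fun i' => (nb2 i').card) ≤
        max 3 (Finset.univ.sup fun i => (td.bag i).card) := by
      refine Finset.sup_le fun i' _ => ?_
      cases i' with
      | none =>
        refine le_trans ?_ (le_max_left _ _)
        rw [hnb2]
        refine le_trans (Finset.card_insert_le _ _) (Nat.succ_le_succ ?_)
        refine le_trans (Finset.card_insert_le _ _) (Nat.succ_le_succ ?_)
        simp
      | some i =>
        refine le_trans ?_ (le_max_right _ _)
        rw [hnb2]
        exact le_trans (Finset.card_image_le) (Finset.le_sup (f := fun i => (td.bag i).card) (Finset.mem_univ i))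
    have h1 : treewidth G ≤
        (@Finset.univ (Option td.ι) _).sup (fun i' => (nb2 i').card) - 1 := by
      let td2 : TreeDecomp G :=
        { ι := Option td.ι
          fin := inferInstance
          tree := pendant td.tree i0
          isTree := pendant_isTree td.tree td.isTree i0
          bag := nb2
          cover_vertex := hcv
          cover_edge := hce
          bag_connected := hconn }
      exact Nat.sInf_le ⟨td2, rfl⟩
    have h2 : td.width = (Finset.univ.sup fun i => (td.bag i).card) - 1 := rfl
    rcases le_total (Finset.univ.sup fun i => (td.bag i).card) 3 with h3 | h3
    · have : max 3 (Finset.univ.sup fun i => (td.bag i).card) = 3 := max_eq_left h3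
      rw [this] at hwid
      refine le_trans h1 (le_trans (Nat.sub_le_sub_right hwid 1) ?_)
      exact le_trans (by norm_num) (le_max_left 2 td.width)
    · have : max 3 (Finset.univ.sup fun i => (td.bag i).card)
          = Finset.univ.sup fun i => (td.bag i).card := max_eq_right h3
      rw [this] at hwid
      refine le_trans h1 (le_trans (Nat.sub_le_sub_right hwid 1) ?_)
      rw [← h2]
      exact le_max_right 2 td.width
  have htd' : td.width = treewidth (suppress G v a b) := htd
  rw [htd'] at hdir2
  rcases le_total (treewidth (suppress G v a b)) 2 with h | h
  · exfalso
    rw [max_eq_left h] at hdir2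
    omega
  · rw [max_eq_right h] at hdir2
    exact le_antisymm dir1 hdir2
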